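/- arXiv:1910.07399 — 2 statements merged into one kernel-verified Lean document; each statement's English description precedes it below -/
import Mathlib

section
/- The Thue-Morse subshift Ω is aperiodic: the shift action of ℤ on Ω is free, i.e. if w ∈ Ω and σⁿ(w) = w for some n ∈ ℤ, then n = 0. -/
open Fin.NatCast in
/-- Thue-Morse sequence: parity of number of 1s in binary expansion. -/
def tm (n : ℕ) : Fin 2 := ((Nat.digits 2 n).count 1 : Fin 2)

/-- Thue-Morse substitution on letters. -/
def zetaWord (a : Fin 2) : List (Fin 2) := [a, 1 - a]

/-- Thue-Morse substitution on words. -/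
def zetaL (w : List (Fin 2)) : List (Fin 2) := w.flatMap zetaWord

/-- Shift on bi-infinite sequences. -/
def shiftZ (w : ℤ → Fin 2) : ℤ → Fin 2 := fun n => w (n + 1)

/-- ζ on bi-infinite sequences: ζ(w)(2n)=w(n), ζ(w)(2n+1)=1-w(n). -/
def zetaZ (w : ℤ → Fin 2) : ℤ → Fin 2 :=
  fun n => if n % 2 = 0 then w (n / 2) else 1 - w (n / 2)

/-- `v` occurs as a factor of the bi-infinite word `w`. -/
def IsFactorZ (v : List (Fin 2)) (w : ℤ → Fin 2) : Prop :=
  ∃ i : ℤ, ∀ k : ℕ, k < v.length → w (i + k) = v.getD k 0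

/-- The Thue-Morse subshift: bi-infinite words all of whose factors occur in some ζⁿ(0). -/
def Omega : Set (ℤ → Fin 2) :=
  {w | ∀ v : List (Fin 2), IsFactorZ v w → ∃ n : ℕ, v <:+: zetaL^[n] [0]}


lemma tm_two_mul (n : ℕ) : tm (2*n) = tm n := by
  rcases Nat.eq_zero_or_pos n with h | h
  · subst h; rfl
  · unfold tm
    rw [Nat.digits_def' (by norm_num) (by omega)]
    simp [Nat.mul_div_cancel_left, Nat.mul_mod_right]

open Fin.NatCast in
lemma tm_two_mul_add_one (n : ℕ) : tm (2*n+1) = 1 - tm n := by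
  unfold tm
  rw [Nat.digits_def' (by norm_num) (by omega)]
  have h1 : (2*n+1) % 2 = 1 := by omega
  have h2 : (2*n+1) / 2 = n := by omega
  rw [h1, h2, List.count_cons]
  simp only [beq_self_eq_true, if_true]
  push_cast
  generalize ((Nat.digits 2 n).count 1 : Fin 2) = x
  revert x; decide

lemma fin2_sub_ne : ∀ x : Fin 2, 1 - x ≠ x := by decide
lemma fin2_sub_inj : ∀ x y : Fin 2, 1 - x = 1 - y → x = y := by decide
lemma fin2_sub_sub : ∀ x : Fin 2, 1 - (1 - x) = x := by decide

lemma tm_congr {x y : ℕ} (h : x = y) : tm x = tm y := by rw [h]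

lemma tm_no_triple (n : ℕ) : ¬ (tm n = tm (n+1) ∧ tm (n+1) = tm (n+2)) := by
  rintro ⟨h1, h2⟩
  rcases Nat.even_or_odd n with ⟨a, ha⟩ | ⟨a, ha⟩
  · have h1' : tm (2*a) = tm (2*a+1) :=
      (tm_congr (by omega)).symm.trans (h1.trans (tm_congr (by omega)))
    rw [tm_two_mul, tm_two_mul_add_one] at h1'
    exact fin2_sub_ne _ h1'.symm
  · have h2' : tm (2*(a+1)) = tm (2*(a+1)+1) :=
      (tm_congr (by omega)).symm.trans (h2.trans (tm_congr (by omega)))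
    rw [tm_two_mul, tm_two_mul_add_one] at h2'
    exact fin2_sub_ne _ h2'.symm

lemma tm_not_periodic : ∀ p : ℕ, 0 < p → ∀ i : ℕ, ¬ (∀ k ≤ p, tm (i + k) = tm (i + k + p)) := by
  intro p
  induction p using Nat.strong_induction_on with
  | _ p IH =>
    intro hp i H
    -- normalized instances of H
    have H' : ∀ m, i ≤ m → m ≤ i + p → tm m = tm (m + p) := by
      intro m h1 h2
      have := H (m - i) (by omega)
      exact (tm_congr (by omega)).symm.trans (this.trans (tm_congr (by omega)))
    rcases Nat.even_or_odd p with ⟨q, hq⟩ | ⟨r, hr⟩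
    · -- p = 2q even
      have hq1 : 1 ≤ q := by omega
      apply IH q (by omega) hq1 (i / 2)
      intro k hk
      rcases Nat.even_or_odd i with ⟨a, ha⟩ | ⟨a, ha⟩
      · have hi : i / 2 = a := by omega
        have h := H' (2*(a+k)) (by omega) (by omega)
        rw [tm_two_mul] at h
        rw [hi]
        refine h.trans ?_
        exact (tm_congr (by omega : 2*(a+k)+p = 2*(a+k+q))).trans (tm_two_mul _)
      · have hi : i / 2 = a := by omega
        have h := H' (2*(a+k)+1) (by omega) (by omega)
        rw [tm_two_mul_add_one] at h
        have h2 : tm (2*(a+k)+1+p) = 1 - tm (a+k+q) :=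
          (tm_congr (by omega : 2*(a+k)+1+p = 2*(a+k+q)+1)).trans (tm_two_mul_add_one _)
        rw [h2] at h
        rw [hi]
        exact fin2_sub_inj _ _ h
    · -- p = 2r+1 odd
      rcases Nat.eq_zero_or_pos r with hr0 | hr0
      · -- p = 1
        apply tm_no_triple i
        refine ⟨?_, ?_⟩
        · exact (H' i (by omega) (by omega)).trans (tm_congr (by omega))
        · exact (tm_congr (by omega)).symm.trans
            ((H' (i+1) (by omega) (by omega)).trans (tm_congr (by omega)))
      · rcases Nat.even_or_odd i with ⟨a, ha⟩ | ⟨a, ha⟩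
        · -- i = 2a even
          have hE : ∀ k ≤ r, tm (a+k) = 1 - tm (a+k+r) := by
            intro k hk
            have h := H' (2*(a+k)) (by omega) (by omega)
            rw [tm_two_mul] at h
            refine h.trans ?_
            refine (tm_congr (by omega : 2*(a+k)+p = 2*(a+k+r)+1)).trans ?_
            exact tm_two_mul_add_one _
          have hO : ∀ k ≤ r, 1 - tm (a+k) = tm (a+k+r+1) := by
            intro k hk
            have h := H' (2*(a+k)+1) (by omega) (by omega)
            rw [tm_two_mul_add_one] at h
            refine h.trans ?_
            exact (tm_congr (by omega : 2*(a+k)+1+p = 2*(a+k+r+1))).trans (tm_two_mul _)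
          have key : ∀ k ≤ r, tm (a+k+r) = tm (a+k+r+1) := by
            intro k hk
            have h2 := hO k hk
            rw [hE k hk, fin2_sub_sub] at h2
            exact h2
          apply tm_no_triple (a+r)
          refine ⟨?_, ?_⟩
          · exact (tm_congr (by omega)).symm.trans
              ((key 0 (by omega)).trans (tm_congr (by omega)))
          · exact (tm_congr (by omega)).symm.trans
              ((key 1 (by omega)).trans (tm_congr (by omega)))
        · -- i = 2a+1 odd
          have hE : ∀ k ≤ r, tm (a+1+k) = 1 - tm (a+1+k+r) := by
            intro k hk
            have h := H' (2*(a+1+k)) (by omega) (by omega)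
            rw [tm_two_mul] at h
            refine h.trans ?_
            exact (tm_congr (by omega : 2*(a+1+k)+p = 2*(a+1+k+r)+1)).trans (tm_two_mul_add_one _)
          have hO : ∀ k ≤ r, 1 - tm (a+k) = tm (a+k+r+1) := by
            intro k hk
            have h := H' (2*(a+k)+1) (by omega) (by omega)
            rw [tm_two_mul_add_one] at h
            refine h.trans ?_
            exact (tm_congr (by omega : 2*(a+k)+1+p = 2*(a+k+r+1))).trans (tm_two_mul _)
          rcases Nat.lt_or_ge r 2 with hr2 | hr2
          · -- r = 1
            have hr1 : r = 1 := by omega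
            subst hr1
            have e0 : tm (a+1) = 1 - tm (a+2) :=
              (tm_congr (by omega)).symm.trans
                ((hE 0 (by omega)).trans (congrArg (1 - ·) (tm_congr (by omega))))
            have e1 : tm (a+2) = 1 - tm (a+3) :=
              (tm_congr (by omega)).symm.trans
                ((hE 1 (by omega)).trans (congrArg (1 - ·) (tm_congr (by omega))))
            have o1 : 1 - tm (a+1) = tm (a+3) :=
              (congrArg (1 - ·) (tm_congr (by omega))).trans
                ((hO 1 (by omega)).trans (tm_congr (by omega)))
            rw [e1, fin2_sub_sub, ← o1] at e0
            exact fin2_sub_ne _ e0.symm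
          · have key : ∀ k, k + 1 ≤ r → tm (a+k+r+1) = tm (a+k+r+2) := by
              intro k hk
              have h1 : tm (a+k+1) = 1 - tm (a+k+r+1) :=
                (tm_congr (by omega)).symm.trans
                  ((hE k (by omega)).trans (congrArg (1 - ·) (tm_congr (by omega))))
              have h2 : 1 - tm (a+k+1) = tm (a+k+r+2) :=
                (congrArg (1 - ·) (tm_congr (by omega))).trans
                  ((hO (k+1) (by omega)).trans (tm_congr (by omega)))
              rw [h1, fin2_sub_sub] at h2
              exact h2
            apply tm_no_triple (a+r+1)
            refine ⟨?_, ?_⟩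
            · exact (tm_congr (by omega)).symm.trans
                ((key 0 (by omega)).trans (tm_congr (by omega)))
            · exact (tm_congr (by omega)).symm.trans
                ((key 1 (by omega)).trans (tm_congr (by omega)))

lemma zetaL_cons (a : Fin 2) (w : List (Fin 2)) :
    zetaL (a :: w) = a :: (1-a) :: zetaL w := by
  simp [zetaL, zetaWord]

lemma zetaL_length (w : List (Fin 2)) : (zetaL w).length = 2 * w.length := by
  induction w with
  | nil => rfl
  | cons a t ih => rw [zetaL_cons]; simp [ih]; omega

lemma zetaL_getD (w : List (Fin 2)) :
    ∀ k, k < w.length →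
      (zetaL w).getD (2*k) 0 = w.getD k 0 ∧ (zetaL w).getD (2*k+1) 0 = 1 - w.getD k 0 := by
  induction w with
  | nil => intro k hk; simp at hk
  | cons a t ih =>
    intro k hk
    cases k with
    | zero => rw [zetaL_cons]; simp
    | succ k =>
      rw [zetaL_cons]
      have e1 : 2*(k+1) = (2*k+1)+1 := by omega
      rw [e1]
      simp only [List.getD_cons_succ]
      exact ih k (by simpa using hk)

lemma zetaL_iter_length (m : ℕ) : (zetaL^[m] [0]).length = 2^m := by
  induction m with
  | zero => rfl
  | succ m ih =>
    rw [Function.iterate_succ_apply', zetaL_length, ih]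
    ring

lemma zetaL_iter_getD (m : ℕ) : ∀ k, k < 2^m → (zetaL^[m] [0]).getD k 0 = tm k := by
  induction m with
  | zero =>
    intro k hk
    interval_cases k
    rw [Function.iterate_zero_apply]
    simp [tm]
  | succ m ih =>
    intro k hk
    rw [Function.iterate_succ_apply']
    rcases Nat.even_or_odd k with ⟨j, hj⟩ | ⟨j, hj⟩
    · have hj2 : k = 2*j := by omega
      have hjlt : j < 2^m := by
        have : 2^(m+1) = 2*2^m := by ring
        omega
      rw [hj2, (zetaL_getD _ j (by rw [zetaL_iter_length]; exact hjlt)).1, ih j hjlt,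
        tm_two_mul]
    · have hj2 : k = 2*j+1 := by omega
      have hjlt : j < 2^m := by
        have : 2^(m+1) = 2*2^m := by ring
        omega
      rw [hj2, (zetaL_getD _ j (by rw [zetaL_iter_length]; exact hjlt)).2, ih j hjlt,
        tm_two_mul_add_one]

lemma infix_tm {v : List (Fin 2)} {m : ℕ} (h : v <:+: zetaL^[m] [0]) :
    ∃ j : ℕ, ∀ k, k < v.length → v.getD k 0 = tm (j + k) := by
  obtain ⟨s, t, hst⟩ := h
  refine ⟨s.length, fun k hk => ?_⟩
  have h1 : (zetaL^[m] [0]).getD (s.length + k) 0 = v.getD k 0 := by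
    rw [← hst]
    rw [List.getD_append _ _ _ _ (by simp; omega),
      List.getD_append_right _ _ _ _ (by omega)]
    simp only [Nat.add_sub_cancel_left]
  rw [← h1, zetaL_iter_getD]
  rw [← zetaL_iter_length m, ← hst]
  simp
  omega

theorem thue_morse_subshift_aperiodic :
    ∀ w ∈ Omega, ∀ n : ℤ, (∀ k : ℤ, w (k + n) = w k) → n = 0 := by
  intro w hw n hper
  by_contra hn
  set N : ℕ := n.natAbs with hN
  have hN1 : 1 ≤ N := by omega
  have hNper : ∀ k : ℤ, w (k + (N : ℤ)) = w k := by
    intro k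
    rcases Int.lt_or_lt_of_ne hn with h | h
    · have : (N : ℤ) = -n := by omega
      rw [this]
      have := hper (k - n)
      simpa [sub_eq_add_neg] using this.symm
    · have : (N : ℤ) = n := by omega
      rw [this]; exact hper k
  set v : List (Fin 2) := (List.range (2*N+1)).map (fun k : ℕ => w (k : ℤ)) with hv
  have hvlen : v.length = 2*N+1 := by simp [hv]
  have hvget : ∀ k, k < 2*N+1 → v.getD k 0 = w (k : ℤ) := by
    intro k hk
    rw [hv, List.getD_eq_getElem?_getD]
    simp [hk]
  have hfac : IsFactorZ v w := by
    refine ⟨0, fun k hk => ?_⟩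
    rw [hvget k (by rw [hvlen] at hk; exact hk)]
    norm_num
  obtain ⟨m, hinf⟩ := hw v hfac
  obtain ⟨j, htm⟩ := infix_tm hinf
  apply tm_not_periodic N (by omega) j
  intro k hk
  have h1 : tm (j + k) = w (k : ℤ) := by
    rw [← htm k (by rw [hvlen]; omega), hvget k (by omega)]
  have h2 : tm (j + k + N) = w ((k : ℤ) + N) := by
    have e : j + k + N = j + (k + N) := by omega
    rw [e, ← htm (k+N) (by rw [hvlen]; omega), hvget (k+N) (by omega)]
    push_cast
    ring_nf
  rw [h1, h2, hNper]
end

section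
/- The Thue-Morse subshift is minimal: for every w ∈ Ω, the orbit {σⁿ(w) : n ∈ ℤ} is dense in Ω. -/
lemma zetaL_append (u v : List (Fin 2)) : zetaL (u ++ v) = zetaL u ++ zetaL v := by
  simp [zetaL]

lemma zetaL_iter_append (n : ℕ) (u v : List (Fin 2)) :
    zetaL^[n] (u ++ v) = zetaL^[n] u ++ zetaL^[n] v := by
  induction n generalizing u v with
  | zero => simp
  | succ n ih => rw [Function.iterate_succ_apply, Function.iterate_succ_apply,
      Function.iterate_succ_apply, zetaL_append, ih]

lemma zetaL_single (a : Fin 2) : zetaL [a] = [a] ++ [1 - a] := rfl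

lemma zetaL_iter_len (n : ℕ) (a : Fin 2) : (zetaL^[n] [a]).length = 2 ^ n := by
  induction n generalizing a with
  | zero => rfl
  | succ n ih =>
    rw [Function.iterate_succ_apply, zetaL_single, zetaL_iter_append]
    simp only [List.length_append, ih]
    ring

lemma zetaL_iter_flatMap (n : ℕ) (u : List (Fin 2)) :
    zetaL^[n] u = u.flatMap (fun c => zetaL^[n] [c]) := by
  induction u with
  | nil => simp [Function.iterate_fixed (rfl : zetaL [] = []) n]
  | cons c u' ih =>
    rw [show c :: u' = [c] ++ u' from rfl, zetaL_iter_append, ih]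
    simp

lemma zeta_two (c : Fin 2) : zetaL (zetaL [c]) = [c] ++ [1-c] ++ [1-c] ++ [c] := by
  fin_cases c <;> rfl

lemma zeta_m0_infix (m : ℕ) (c : Fin 2) : zetaL^[m] [0] <:+: zetaL^[m+2] [c] := by
  have h : zetaL^[m+2] [c]
      = zetaL^[m] [c] ++ zetaL^[m] [1-c] ++ zetaL^[m] [1-c] ++ zetaL^[m] [c] := by
    rw [Function.iterate_add_apply zetaL m 2 [c],
      show zetaL^[2] [c] = [c] ++ [1-c] ++ [1-c] ++ [c] from zeta_two c,
      zetaL_iter_append, zetaL_iter_append, zetaL_iter_append]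
  rw [h]
  fin_cases c
  · exact ⟨[], zetaL^[m] [1-0] ++ (zetaL^[m] [1-0] ++ zetaL^[m] [0]), by
      simp [List.append_assoc]⟩
  · refine ⟨zetaL^[m] [1], zetaL^[m] [1-1] ++ zetaL^[m] [1], ?_⟩
    have h10 : (1 : Fin 2) - 1 = 0 := rfl
    rw [h10]
    simp [List.append_assoc]

lemma infix_block {α β : Type*} (f : α → List β) (L : ℕ) (hL : 0 < L)
    (hf : ∀ a, (f a).length = L) :
    ∀ (u : List α) (v : List β), v <:+: u.flatMap f → 2 * L ≤ v.length →
      ∃ a ∈ u, f a <:+: v := by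
  intro u
  induction u with
  | nil =>
    intro v hv hlen
    simp only [List.flatMap_nil] at hv
    rw [List.infix_nil] at hv
    subst hv
    simp at hlen
    omega
  | cons a u' ih =>
    intro v hv hlen
    obtain ⟨s, t, hst⟩ := hv
    rw [List.flatMap_cons, List.append_assoc] at hst
    rcases List.append_eq_append_iff.mp hst with ⟨s', h1, h2⟩ | ⟨c', h1, h2⟩
    · -- h1 : f a = s ++ s', h2 : v ++ t = s' ++ u'.flatMap f
      have hs' : s'.length ≤ L := by
        have := hf a
        rw [h1] at this
        simp at this
        omega
      rcases List.append_eq_append_iff.mp h2 with ⟨x, hx1, hx2⟩ | ⟨v', hv1, hv2⟩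
      · -- hx1 : s' = v ++ x : then |v| ≤ |s'| ≤ L < 2L, contra
        have : v.length ≤ s'.length := by rw [hx1]; simp
        omega
      · -- hv1 : v = s' ++ v', hv2 : u'.flatMap f = v' ++ t
        have hv'len : L ≤ v'.length := by
          have : v.length = s'.length + v'.length := by rw [hv1]; simp
          omega
        cases u' with
        | nil =>
          have hv0 : v' = [] := by
            have := congrArg List.length hv2
            simp at this
            exact List.length_eq_zero_iff.mp (by omega)
          subst hv0
          simp at hv'len
          omega
        | cons b u'' =>
          rw [List.flatMap_cons] at hv2
          rcases List.append_eq_append_iff.mp hv2.symm with ⟨x, hx1, hx2⟩ | ⟨c2, hc1, hc2⟩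
          · -- hx1 : f b = v' ++ x
            have hx0 : x = [] := by
              have := hf b
              rw [hx1] at this
              simp at this
              have : x.length = 0 := by omega
              exact List.length_eq_zero_iff.mp this
            subst hx0
            refine ⟨b, by simp, s', [], ?_⟩
            simp at hx1
            rw [← hx1] at hv1
            simp [hv1.symm]
          · -- hc1 : v' = f b ++ c2
            refine ⟨b, by simp, s', c2, ?_⟩
            rw [hv1, hc1]
            simp [List.append_assoc]
    · -- h1 : s = f a ++ c', h2 : u'.flatMap f = c' ++ (v ++ t)
      have : v <:+: u'.flatMap f := ⟨c', t, by rw [h2]; simp [List.append_assoc]⟩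
      obtain ⟨b, hb, hbv⟩ := ih v this hlen
      exact ⟨b, by simp [hb], hbv⟩

lemma contains_zeta (m p : ℕ) (v : List (Fin 2)) (hv : v <:+: zetaL^[p] [0])
    (hlen : 2 ^ (m + 3) ≤ v.length) : zetaL^[m] [0] <:+: v := by
  have hvle : v.length ≤ 2 ^ p := by
    have := hv.length_le
    rwa [zetaL_iter_len] at this
  have hp : m + 2 ≤ p := by
    have h23 : 2 ^ (m + 3) ≤ 2 ^ p := le_trans hlen hvle
    have := (Nat.pow_le_pow_iff_right (by norm_num : 1 < 2)).mp h23
    omega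
  obtain ⟨q, hq⟩ : ∃ q, p = (m + 2) + q := ⟨p - (m + 2), by omega⟩
  rw [hq, Function.iterate_add_apply, zetaL_iter_flatMap] at hv
  obtain ⟨c, _, hc⟩ := infix_block (fun c => zetaL^[m+2] [c]) (2 ^ (m + 2))
    (by positivity) (fun a => zetaL_iter_len _ _) _ v hv
    (by rw [show 2 * 2 ^ (m + 2) = 2 ^ (m + 3) from by ring]; exact hlen)
  exact (zeta_m0_infix m c).trans hc

lemma getD_map_range {α : Type*} (f : ℕ → α) (M k : ℕ) (hk : k < M) (d : α) :
    ((List.range M).map f).getD k d = f k := by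
  rw [List.getD_eq_getElem _ _ (by simpa using hk)]
  simp

lemma getD_middle {α : Type*} (s v t : List α) (d : α) (k : ℕ) (hk : k < v.length) :
    (s ++ v ++ t).getD (s.length + k) d = v.getD k d := by
  rw [List.append_assoc]
  have h1 : s.length + k < (s ++ (v ++ t)).length := by simp; omega
  rw [List.getD_eq_getElem _ _ h1, List.getD_eq_getElem _ _ hk]
  rw [List.getElem_append_right (by omega : s.length ≤ s.length + k)]
  simp only [Nat.add_sub_cancel_left]
  exact List.getElem_append_left hk

theorem thue_morse_subshift_minimal :
    ∀ w ∈ Omega, ∀ w' ∈ Omega,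
      w' ∈ closure {x : ℤ → Fin 2 | ∃ n : ℤ, x = fun k => w (k + n)} := by
  intro w hw w' hw'
  rw [mem_closure_iff_nhds]
  intro U hU
  rw [nhds_pi] at hU
  obtain ⟨I, hIfin, V, hV, hsub⟩ := Filter.mem_pi.mp hU
  have hVmem : ∀ i, w' i ∈ V i := fun i => mem_of_mem_nhds (hV i)
  set N := hIfin.toFinset.sup (fun i => i.natAbs) with hNdef
  have hNI : ∀ i ∈ I, i.natAbs ≤ N := fun i hi =>
    Finset.le_sup (f := fun i : ℤ => i.natAbs) (hIfin.mem_toFinset.mpr hi)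
  set v' : List (Fin 2) := (List.range (2*N+1)).map (fun k : ℕ => w' (-(N:ℤ) + k)) with hv'def
  have hv'len : v'.length = 2*N+1 := by simp [hv'def]
  have hfac' : IsFactorZ v' w' := by
    refine ⟨-(N:ℤ), fun k hk => ?_⟩
    rw [hv'len] at hk
    rw [hv'def, getD_map_range _ _ _ hk]
  obtain ⟨m, hm⟩ := hw' v' hfac'
  set uw : List (Fin 2) := (List.range (2^(m+3))).map (fun k : ℕ => w (k:ℤ)) with huwdef
  have huwlen : uw.length = 2^(m+3) := by simp [huwdef]
  have hfacu : IsFactorZ uw w := by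
    refine ⟨0, fun k hk => ?_⟩
    rw [huwlen] at hk
    rw [huwdef, getD_map_range _ _ _ hk, zero_add]
  obtain ⟨p, hp⟩ := hw uw hfacu
  have hz : zetaL^[m] [0] <:+: uw := contains_zeta m p uw hp (by rw [huwlen])
  have hvu : v' <:+: uw := hm.trans hz
  obtain ⟨s, t, hst⟩ := hvu
  have hlensum : uw.length = s.length + v'.length + t.length := by
    rw [← hst]; simp; omega
  have hkey : ∀ k : ℕ, k < 2*N+1 → w ((s.length : ℤ) + k) = w' (-(N:ℤ) + k) := by
    intro k hk
    have h1 : s.length + k < 2^(m+3) := by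
      rw [← huwlen, hlensum]; omega
    have e1 : uw.getD (s.length + k) 0 = w ((s.length + k : ℕ) : ℤ) := by
      rw [huwdef, getD_map_range _ _ _ h1]
    have e2 : uw.getD (s.length + k) 0 = v'.getD k 0 := by
      rw [← hst, getD_middle _ _ _ _ _ (by omega)]
    have e3 : v'.getD k 0 = w' (-(N:ℤ) + k) := by
      rw [hv'def, getD_map_range _ _ _ hk]
    rw [← e3, ← e2, e1]
    push_cast
    ring_nf
  refine ⟨fun j => w (j + ((s.length : ℤ) + N)), ?_, ⟨(s.length : ℤ) + N, rfl⟩⟩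
  apply hsub
  intro i hi
  have h1 : i.natAbs ≤ N := hNI i hi
  have h2 : -(N:ℤ) ≤ i ∧ i ≤ N := by omega
  set k : ℕ := (i + N).toNat with hkdef
  have hk1 : (k : ℤ) = i + N := Int.toNat_of_nonneg (by omega)
  have hk2 : k < 2*N+1 := by omega
  have heq : w (i + ((s.length:ℤ) + N)) = w' i := by
    rw [show i + ((s.length:ℤ) + N) = (s.length:ℤ) + k from by omega,
      hkey k hk2, show -(N:ℤ) + k = i from by omega]
  show w (i + ((s.length:ℤ) + N)) ∈ V i
  rw [heq]
  exact hVmem i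
end
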